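/- Define for a second-order ODE w'' + A(z,w)w'³ + B(z,w)w'² + C(z,w)w' + D(z,w) = 0 the Lie expressions Ψ₁ = 3A_{zz} − 2B_{zw} + C_{ww} − 3(CA)_z + 3(DA)_w + (B²)_z + 3A·D_w − B·C_w and Ψ₂ = 3D_{ww} − 2C_{zw} + B_{zz} − 3(DA)_z + 3(DB)_w − (C²)_w − 3D·A_z + C·B_z. For the equation k₀w' + w'² + (w − zk₀)w'' = 0 written in the form w'' + F = 0 on the region w − zk₀ ≠ 0 (i.e., A = 0, B = 1/(w − zk₀), C = k₀/(w − zk₀), D = 0), one has Ψ₁ = 0 and Ψ₂ = 0 identically if and only if k₀ = 0. -/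

import Mathlib

/-- Partial derivative in the first (`z`) slot. -/
noncomputable def pz (f : ℝ → ℝ → ℝ) : ℝ → ℝ → ℝ :=
  fun z w => deriv (fun z' => f z' w) z

/-- Partial derivative in the second (`w`) slot. -/
noncomputable def pw (f : ℝ → ℝ → ℝ) : ℝ → ℝ → ℝ :=
  fun z w => deriv (fun w' => f z w') w

/-- Lie's first linearization invariant
`Ψ₁ = 3A_{zz} − 2B_{zw} + C_{ww} − 3(CA)_z + 3(DA)_w + (B²)_z + 3A·D_w − B·C_w`. -/
noncomputable def Ψ₁ (A B C D : ℝ → ℝ → ℝ) : ℝ → ℝ → ℝ := fun z w =>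
  3 * pz (pz A) z w - 2 * pw (pz B) z w + pw (pw C) z w
    - 3 * pz (fun z w => C z w * A z w) z w + 3 * pw (fun z w => D z w * A z w) z w
    + pz (fun z w => (B z w) ^ 2) z w + 3 * A z w * pw D z w - B z w * pw C z w

/-- Lie's second linearization invariant
`Ψ₂ = 3D_{ww} − 2C_{zw} + B_{zz} − 3(DA)_z + 3(DB)_w − (C²)_w − 3D·A_z + C·B_z`. -/
noncomputable def Ψ₂ (A B C D : ℝ → ℝ → ℝ) : ℝ → ℝ → ℝ := fun z w =>
  3 * pw (pw D) z w - 2 * pw (pz C) z w + pz (pz B) z w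
    - 3 * pz (fun z w => D z w * A z w) z w + 3 * pw (fun z w => D z w * B z w) z w
    - pw (fun z w => (C z w) ^ 2) z w - 3 * D z w * pz A z w + C z w * pz B z w

/-- derivative in z of c/(w - z*k) at z, for u ≠ 0, equals c*k/u². -/
lemma aux_pz (c k z w : ℝ) (h : w - z * k ≠ 0) :
    deriv (fun z' : ℝ => c / (w - z' * k)) z = c * k / (w - z * k) ^ 2 := by
  have h0 : HasDerivAt (fun z' : ℝ => w - z' * k) (-k) z := by
    simpa using ((hasDerivAt_id z).mul_const k).const_sub w
  have h1 := (h0.inv h).const_mul c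
  rw [show (fun z' : ℝ => c / (w - z' * k)) = fun z' : ℝ => c * (w - z' * k)⁻¹ by
    funext x; rw [div_eq_mul_inv]]
  erw [h1.deriv]; field_simp

/-- derivative in w of c/(w - z*k) at w, for u ≠ 0, equals -c/u². -/
lemma aux_pw (c k z w : ℝ) (h : w - z * k ≠ 0) :
    deriv (fun w' : ℝ => c / (w' - z * k)) w = -c / (w - z * k) ^ 2 := by
  have h0 : HasDerivAt (fun w' : ℝ => w' - z * k) 1 w := by
    simpa using (hasDerivAt_id w).sub_const (z * k)
  have h1 := (h0.inv h).const_mul c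
  rw [show (fun w' : ℝ => c / (w' - z * k)) = fun w' : ℝ => c * (w' - z * k)⁻¹ by
    funext x; rw [div_eq_mul_inv]]
  erw [h1.deriv]; field_simp

/-- derivative in w of c/w² at 1 equals -2c. -/
lemma aux_pw_sq (c : ℝ) :
    deriv (fun w' : ℝ => c / w' ^ 2) 1 = -2 * c := by
  have h := ((hasDerivAt_pow 2 (1:ℝ)).inv (by norm_num)).const_mul c
  rw [show (fun w' : ℝ => c / w' ^ 2) = fun w' : ℝ => c * (w' ^ 2)⁻¹ by
    funext x; rw [div_eq_mul_inv]]
  erw [h.deriv]; push_cast; ring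

theorem linearization_test_L27 (k₀ : ℝ) :
    (∀ z w : ℝ, w - z * k₀ ≠ 0 →
        Ψ₁ (fun _ _ => 0) (fun z w => 1 / (w - z * k₀)) (fun z w => k₀ / (w - z * k₀))
          (fun _ _ => 0) z w = 0 ∧
        Ψ₂ (fun _ _ => 0) (fun z w => 1 / (w - z * k₀)) (fun z w => k₀ / (w - z * k₀))
          (fun _ _ => 0) z w = 0) ↔ k₀ = 0 := by
  constructor
  · intro h
    have h1 := (h 0 1 (by norm_num)).1
    -- compute Ψ₁ at (0,1) = 9 k₀
    have e2 : pw (pz (fun z w => 1 / (w - z * k₀))) 0 1 = -2 * k₀ := by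
      have hEq : (fun w' : ℝ => pz (fun z w => 1 / (w - z * k₀)) 0 w')
          =ᶠ[nhds (1:ℝ)] fun w' => k₀ / w' ^ 2 := by
        filter_upwards [isOpen_ne.mem_nhds (show (1:ℝ) ≠ 0 by norm_num)] with w' hw'
        have := aux_pz 1 k₀ 0 w' (by simpa using hw')
        simpa [pz] using this
      simp only [pw]
      rw [hEq.deriv_eq, aux_pw_sq]
    have e3 : pw (pw (fun z w => k₀ / (w - z * k₀))) 0 1 = 2 * k₀ := by
      have hEq : (fun w' : ℝ => pw (fun z w => k₀ / (w - z * k₀)) 0 w')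
          =ᶠ[nhds (1:ℝ)] fun w' => -k₀ / w' ^ 2 := by
        filter_upwards [isOpen_ne.mem_nhds (show (1:ℝ) ≠ 0 by norm_num)] with w' hw'
        have := aux_pw k₀ k₀ 0 w' (by simpa using hw')
        simpa [pw] using this
      have := hEq.deriv_eq
      rw [show (fun w' : ℝ => -k₀ / w' ^ 2) = fun w' : ℝ => (-k₀) / w' ^ 2 by rfl] at this
      simp only [pw] at this ⊢
      rw [this, aux_pw_sq]; ring
    have e6 : pz (fun z w => (1 / (w - z * k₀)) ^ 2) 0 1 = 2 * k₀ := by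
      have h0 : HasDerivAt (fun z' : ℝ => (1:ℝ) - z' * k₀) (-k₀) 0 := by
        simpa using ((hasDerivAt_id (0:ℝ)).mul_const k₀).const_sub 1
      have hinv := h0.inv (by norm_num)
      have hpow := hinv.pow 2
      have hfn : (fun z' : ℝ => (1 / (1 - z' * k₀)) ^ 2)
          = fun z' : ℝ => ((1:ℝ) - z' * k₀)⁻¹ ^ 2 := by
        funext x; rw [one_div]
      simp only [pz]
      rw [hfn]; erw [hpow.deriv]; norm_num
    have e8 : pw (fun z w => k₀ / (w - z * k₀)) 0 1 = -k₀ := by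
      have := aux_pw k₀ k₀ 0 1 (by norm_num)
      simpa [pw] using this
    simp only [Ψ₁, mul_zero, zero_mul, e2, e3, e6, e8] at h1
    simp only [pz, pw, deriv_const, deriv_const'] at h1
    norm_num at h1
    linarith
  · intro h z w hw
    subst h
    simp only [mul_zero, sub_zero] at hw
    constructor
    · simp [Ψ₁, pz, pw, hw]
    · simp [Ψ₂, pz, pw, hw]
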